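/- arXiv:2012.08363 — 4 statements merged into one kernel-verified Lean document; each statement's English description precedes it below -/
import Mathlib

section
/- Let k ∈ V be a nonzero null vector (g(k,k) = 0) and let (n, m, m̄) be a Newman–Penrose tetrad adapted to k. Then the kernel of the linear operator D[k], acting on the space of complex symmetric bilinear forms on W, is exactly the ℂ-linear span of the six forms k⊙k, k⊙n, k⊙m, k⊙m̄, m⊙m, m̄⊙m̄; in particular, this kernel has complex dimension 6. -/
open scoped TensorProduct
open Module

noncomputable section

variable {V : Type} [AddCommGroup V] [Module ℝ V]

/-- The complexification `W = ℂ ⊗ V` of the real vector space `V`. -/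
abbrev Cx (V : Type) [AddCommGroup V] [Module ℝ V] := ℂ ⊗[ℝ] V

/-- The canonical inclusion of `V` into its complexification `W = ℂ ⊗ V`. -/
def ι (v : V) : Cx V := (1 : ℂ) ⊗ₜ[ℝ] v

/-- Complex conjugation `u ↦ ū` on `W = ℂ ⊗ V` induced by the real structure. -/
def conjW : Cx V →ₗ[ℝ] Cx V :=
  TensorProduct.map Complex.conjAe.toLinearMap LinearMap.id

lemma conjW_smul (c : ℂ) (u : Cx V) :
    conjW (c • u) = (starRingEnd ℂ c) • conjW u := by
  induction u using TensorProduct.induction_on with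
  | zero => simp
  | tmul x v =>
      simp [conjW, TensorProduct.smul_tmul', smul_eq_mul, map_mul, TensorProduct.map_tmul]
  | add a b ha hb => simp [smul_add, map_add, ha, hb]

/-- The ℂ-bilinear extension of `g` to `W = ℂ ⊗ V`. -/
def gW (g : LinearMap.BilinForm ℝ V) : LinearMap.BilinForm ℂ (Cx V) :=
  g.baseChange ℂ

/-- The symmetric product `u ⊙ v`, as a complex bilinear form on `W`:
`(u ⊙ v)(a,b) = (1/2) (g(u,a) g(v,b) + g(v,a) g(u,b))`. -/
def sprod (g : LinearMap.BilinForm ℝ V) (u v : Cx V) : LinearMap.BilinForm ℂ (Cx V) :=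
  LinearMap.mk₂ ℂ
    (fun a b => (1 / 2 : ℂ) * (gW g u a * gW g v b + gW g v a * gW g u b))
    (by intro a a' b; simp only [map_add]; ring)
    (by intro c a b; simp only [map_smul, smul_eq_mul]; ring)
    (by intro a b b'; simp only [map_add]; ring)
    (by intro a c b; simp only [map_smul, smul_eq_mul]; ring)

/-- The symmetric product with a fixed vector, as a linear map `b ↦ u ⊙ b`. -/
def sprodL (g : LinearMap.BilinForm ℝ V) (u : Cx V) :
    Cx V →ₗ[ℂ] LinearMap.BilinForm ℂ (Cx V) where
  toFun v := sprod g u v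
  map_add' v v' := by
    refine LinearMap.ext fun a => LinearMap.ext fun b => ?_
    simp only [sprod, LinearMap.mk₂_apply, LinearMap.add_apply, map_add]
    ring
  map_smul' c v := by
    refine LinearMap.ext fun a => LinearMap.ext fun b => ?_
    simp only [sprod, LinearMap.mk₂_apply, LinearMap.smul_apply, map_smul, smul_eq_mul,
      RingHom.id_apply]
    ring

/-- The conjugate form `ā` of a complex bilinear form `a` on `W`:
`ā(u,v) = conj (a(ū, v̄))`. -/
def conjForm (a : LinearMap.BilinForm ℂ (Cx V)) : LinearMap.BilinForm ℂ (Cx V) :=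
  LinearMap.mk₂ ℂ (fun u v => starRingEnd ℂ (a (conjW u) (conjW v)))
    (by intro u u' v; simp only [map_add, LinearMap.add_apply])
    (by intro c u v; simp only [conjW_smul, map_smul, LinearMap.smul_apply, smul_eq_mul,
          map_mul, Complex.conj_conj])
    (by intro u v v'; simp only [map_add])
    (by intro u c v; simp only [conjW_smul, map_smul, LinearMap.smul_apply, smul_eq_mul,
          map_mul, Complex.conj_conj])

/-- A Newman–Penrose tetrad `(k, n, m, m̄)` adapted to a nonzero null `k ∈ V`:
all the orthogonality relations of the tetrad. -/
def IsNPTetrad (g : LinearMap.BilinForm ℝ V) (k n : V) (m : Cx V) : Prop :=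
  gW g m (conjW m) = 1 ∧ gW g (ι k) (ι n) = -1 ∧
    gW g (ι k) (ι k) = 0 ∧ gW g (ι n) (ι n) = 0 ∧
    gW g m m = 0 ∧ gW g (conjW m) (conjW m) = 0 ∧
    gW g (ι k) m = 0 ∧ gW g (ι k) (conjW m) = 0 ∧
    gW g (ι n) m = 0 ∧ gW g (ι n) (conjW m) = 0

variable [FiniteDimensional ℝ V]

/-- The `g`-associated endomorphism `Ŝ` of a bilinear form `S` on `W`, characterized by
`g(Ŝ a, b) = S(a, b)` (defined when the extension of `g` to `W` is nondegenerate, which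
holds whenever `g` is nondegenerate). -/
def hatEnd (g : LinearMap.BilinForm ℝ V) (S : LinearMap.BilinForm ℂ (Cx V)) :
    Cx V →ₗ[ℂ] Cx V :=
  letI := Classical.dec ((gW g).Nondegenerate)
  if hnd : (gW g).Nondegenerate then ((gW g).toDual hnd).symm.toLinearMap ∘ₗ S else 0

/-- The metric trace `tr_g S` of a bilinear form `S` on `W`. -/
def trg (g : LinearMap.BilinForm ℝ V) (S : LinearMap.BilinForm ℂ (Cx V)) : ℂ :=
  LinearMap.trace ℂ (Cx V) (hatEnd g S)

/-- The full metric contraction `⟨A, B⟩ = tr (Â ∘ B̂)` of bilinear forms on `W`. -/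
def contr (g : LinearMap.BilinForm ℝ V) (A B : LinearMap.BilinForm ℂ (Cx V)) : ℂ :=
  LinearMap.trace ℂ (Cx V) (hatEnd g A ∘ₗ hatEnd g B)

/-- The value `D[k](S)(u,v)` of the symbol operator `D[k]` on a bilinear form `S`. -/
def Dval (g : LinearMap.BilinForm ℝ V) (k : V) (S : LinearMap.BilinForm ℂ (Cx V))
    (u v : Cx V) : ℂ :=
  (1 / 2 : ℂ) *
    (gW g (ι k) (ι k) * S u v - gW g (ι k) (ι k) * gW g u v * trg g S
      + gW g (ι k) u * gW g (ι k) v * trg g S + gW g u v * S (ι k) (ι k)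
      - gW g (ι k) u * S (ι k) v - gW g (ι k) v * S (ι k) u)

/-- The symbol operator `D[k]`, acting on bilinear forms on `W`. -/
def Dop (g : LinearMap.BilinForm ℝ V) (k : V) (S : LinearMap.BilinForm ℂ (Cx V)) :
    LinearMap.BilinForm ℂ (Cx V) :=
  LinearMap.mk₂ ℂ (fun u v => Dval g k S u v)
    (by intro u u' v; simp only [Dval, map_add, LinearMap.add_apply]; ring)
    (by intro c u v; simp only [Dval, map_smul, LinearMap.smul_apply, smul_eq_mul]; ring)
    (by intro u v v'; simp only [Dval, map_add, LinearMap.add_apply]; ring)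
    (by intro u c v; simp only [Dval, map_smul, LinearMap.smul_apply, smul_eq_mul]; ring)

section Helper

variable {V : Type} [AddCommGroup V] [Module ℝ V]

lemma gW_symm (g : LinearMap.BilinForm ℝ V) (hsymm : g.IsSymm) (x y : Cx V) :
    gW g x y = gW g y x := by
  exact (LinearMap.BilinForm.IsSymm.baseChange ℂ (LinearMap.BilinForm.isSymm_iff.mp hsymm)).eq x y

/-- The tetrad family. -/
def tf (k n : V) (m : Cx V) : Fin 4 → Cx V := ![ι k, ι n, m, conjW m]

/-- The Gram matrix of the tetrad. -/
def GM : Matrix (Fin 4) (Fin 4) ℂ := !![0,-1,0,0; -1,0,0,0; 0,0,0,1; 0,0,1,0]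

variable {g : LinearMap.BilinForm ℝ V} {k n : V} {m : Cx V}

lemma tf_gram (hsymm : g.IsSymm) (ht : IsNPTetrad g k n m) (i j : Fin 4) :
    gW g (tf k n m i) (tf k n m j) = GM i j := by
  obtain ⟨h1,h2,h3,h4,h5,h6,h7,h8,h9,h10⟩ := ht
  have hs := gW_symm g hsymm
  have h1' := (hs m (conjW m)).symm.trans h1
  have h2' := (hs (ι k) (ι n)).symm.trans h2
  have h7' := (hs (ι k) m).symm.trans h7
  have h8' := (hs (ι k) (conjW m)).symm.trans h8
  have h9' := (hs (ι n) m).symm.trans h9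
  have h10' := (hs (ι n) (conjW m)).symm.trans h10
  fin_cases i <;> fin_cases j <;>
    simp [tf, GM, h1, h2, h3, h4, h5, h6, h7, h8, h9, h10, h1', h2', h7', h8', h9', h10', Matrix.vecHead, Matrix.vecTail]

lemma tf_li (hsymm : g.IsSymm) (ht : IsNPTetrad g k n m) :
    LinearIndependent ℂ (tf k n m) := by
  rw [Fintype.linearIndependent_iff]
  intro c hc
  have key : ∀ j : Fin 4, (∑ i, c i * GM i j) = 0 := by
    intro j
    have := congrArg (fun x => gW g x (tf k n m j)) hc
    simpa [map_sum, LinearMap.sum_apply, LinearMap.smul_apply, smul_eq_mul,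
      tf_gram hsymm ht] using this
  have k0 := key 0; have k1 := key 1; have k2 := key 2; have k3 := key 3
  rw [Fin.sum_univ_four] at k0 k1 k2 k3
  simp [GM, Matrix.vecHead, Matrix.vecTail] at k0 k1 k2 k3
  intro i
  fin_cases i <;> assumption


variable [FiniteDimensional ℝ V]

omit [FiniteDimensional ℝ V] in
lemma gW_sum_coord (hsymm : g.IsSymm) (ht : IsNPTetrad g k n m)
    (B : Basis (Fin 4) ℂ (Cx V)) (hB : ∀ i, B i = tf k n m i) (x : Cx V) (j : Fin 4) :
    gW g x (tf k n m j) = ∑ i, B.repr x i * GM i j := by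
  conv_lhs => rw [← B.sum_repr x]
  rw [map_sum, LinearMap.sum_apply]
  exact Finset.sum_congr rfl fun i _ => by
    rw [map_smul, LinearMap.smul_apply, smul_eq_mul, hB, tf_gram hsymm ht]

lemma repr_formula (hsymm : g.IsSymm) (ht : IsNPTetrad g k n m)
    (B : Basis (Fin 4) ℂ (Cx V)) (hB : ∀ i, B i = tf k n m i) (x : Cx V) :
    B.repr x 0 = -gW g x (tf k n m 1) ∧ B.repr x 1 = -gW g x (tf k n m 0) ∧
      B.repr x 2 = gW g x (tf k n m 3) ∧ B.repr x 3 = gW g x (tf k n m 2) := by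
  have h0 := gW_sum_coord hsymm ht B hB x 0
  have h1 := gW_sum_coord hsymm ht B hB x 1
  have h2 := gW_sum_coord hsymm ht B hB x 2
  have h3 := gW_sum_coord hsymm ht B hB x 3
  rw [Fin.sum_univ_four] at h0 h1 h2 h3
  simp [GM, Matrix.vecHead, Matrix.vecTail] at h0 h1 h2 h3
  exact ⟨by linear_combination h1, by linear_combination h0,
    by linear_combination -h3, by linear_combination -h2⟩

lemma gW_nondeg (hsymm : g.IsSymm) (ht : IsNPTetrad g k n m)
    (B : Basis (Fin 4) ℂ (Cx V)) (hB : ∀ i, B i = tf k n m i) :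
    (gW g).Nondegenerate := by
  have hleft : ∀ x, (∀ y, gW g x y = 0) → x = 0 := by
    intro x hx
    obtain ⟨r0, r1, r2, r3⟩ := repr_formula hsymm ht B hB x
    refine B.ext_elem fun i => ?_
    fin_cases i <;> simp [r0, r1, r2, r3, hx]
  exact ⟨hleft, fun x hx => hleft x fun y => (gW_symm g hsymm x y).trans (hx y)⟩

lemma gW_hatEnd {g : LinearMap.BilinForm ℝ V} (hnd : (gW g).Nondegenerate)
    (S : LinearMap.BilinForm ℂ (Cx V)) (a b : Cx V) :
    gW g (hatEnd g S a) b = S a b := by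
  rw [hatEnd, dif_pos hnd]
  rw [LinearMap.comp_apply]
  exact LinearMap.BilinForm.apply_toDual_symm_apply (hB := hnd) (S a) b

lemma hatEnd_add (g : LinearMap.BilinForm ℝ V) (S T : LinearMap.BilinForm ℂ (Cx V)) :
    hatEnd g (S + T) = hatEnd g S + hatEnd g T := by
  unfold hatEnd
  split_ifs with h
  · ext x; simp
  · simp

lemma hatEnd_smul (g : LinearMap.BilinForm ℝ V) (c : ℂ) (S : LinearMap.BilinForm ℂ (Cx V)) :
    hatEnd g (c • S) = c • hatEnd g S := by
  unfold hatEnd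
  split_ifs with h
  · ext x; simp
  · simp

lemma trg_add (g : LinearMap.BilinForm ℝ V) (S T : LinearMap.BilinForm ℂ (Cx V)) :
    trg g (S + T) = trg g S + trg g T := by
  rw [trg, trg, trg, hatEnd_add, map_add]

lemma trg_smul (g : LinearMap.BilinForm ℝ V) (c : ℂ) (S : LinearMap.BilinForm ℂ (Cx V)) :
    trg g (c • S) = c * trg g S := by
  rw [trg, trg, hatEnd_smul, map_smul, smul_eq_mul]

lemma trg_formula (hsymm : g.IsSymm) (ht : IsNPTetrad g k n m)
    (B : Basis (Fin 4) ℂ (Cx V)) (hB : ∀ i, B i = tf k n m i)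
    (hnd : (gW g).Nondegenerate) (S : LinearMap.BilinForm ℂ (Cx V)) :
    trg g S = -S (tf k n m 0) (tf k n m 1) - S (tf k n m 1) (tf k n m 0)
      + S (tf k n m 2) (tf k n m 3) + S (tf k n m 3) (tf k n m 2) := by
  rw [trg, LinearMap.trace_eq_matrix_trace ℂ B, Matrix.trace, Fin.sum_univ_four]
  have hd : ∀ i : Fin 4, (LinearMap.toMatrix B B (hatEnd g S)).diag i
      = B.repr (hatEnd g S (B i)) i := fun i => by
    rw [Matrix.diag_apply, LinearMap.toMatrix_apply]
  have h0 := (repr_formula hsymm ht B hB (hatEnd g S (B 0))).1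
  have h1 := (repr_formula hsymm ht B hB (hatEnd g S (B 1))).2.1
  have h2 := (repr_formula hsymm ht B hB (hatEnd g S (B 2))).2.2.1
  have h3 := (repr_formula hsymm ht B hB (hatEnd g S (B 3))).2.2.2
  rw [hd 0, hd 1, hd 2, hd 3, h0, h1, h2, h3, gW_hatEnd hnd, gW_hatEnd hnd,
    gW_hatEnd hnd, gW_hatEnd hnd, hB, hB, hB, hB]
  ring

end Helper

set_option maxHeartbeats 4000000 in
/-- The kernel of the symbol operator `D[k]`, acting on complex symmetric bilinear
forms on `W`, is exactly the ℂ-linear span of the six forms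
`k⊙k, k⊙n, k⊙m, k⊙m̄, m⊙m, m̄⊙m̄`; in particular it has complex dimension 6. -/
theorem statement_0 (g : LinearMap.BilinForm ℝ V) (hdim : finrank ℝ V = 4)
    (hg : g.Nondegenerate) (hsymm : g.IsSymm)
    (k n : V) (m : Cx V) (hk : k ≠ 0) (hknull : g k k = 0)
    (htetrad : IsNPTetrad g k n m) :
    {S : LinearMap.BilinForm ℂ (Cx V) | S.IsSymm ∧ ∀ u v, Dval g k S u v = 0}
        = ↑(Submodule.span ℂ
            ({sprod g (ι k) (ι k), sprod g (ι k) (ι n), sprod g (ι k) m,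
            sprod g (ι k) (conjW m), sprod g m m, sprod g (conjW m) (conjW m)} : Set (LinearMap.BilinForm ℂ (Cx V)))) ∧
      finrank ℂ ↥(Submodule.span ℂ
            ({sprod g (ι k) (ι k), sprod g (ι k) (ι n), sprod g (ι k) m,
            sprod g (ι k) (conjW m), sprod g m m, sprod g (conjW m) (conjW m)} : Set (LinearMap.BilinForm ℂ (Cx V)))) = 6 := by
  obtain ⟨h1,h2,h3,h4,h5,h6,h7,h8,h9,h10⟩ := htetrad
  have ht : IsNPTetrad g k n m := ⟨h1,h2,h3,h4,h5,h6,h7,h8,h9,h10⟩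
  have hs := gW_symm g hsymm
  have h1' := (hs m (conjW m)).symm.trans h1
  have h2' := (hs (ι k) (ι n)).symm.trans h2
  have h7' := (hs (ι k) m).symm.trans h7
  have h8' := (hs (ι k) (conjW m)).symm.trans h8
  have h9' := (hs (ι n) m).symm.trans h9
  have h10' := (hs (ι n) (conjW m)).symm.trans h10
  have hli : LinearIndependent ℂ (tf k n m) := tf_li hsymm ht
  have hcard : Fintype.card (Fin 4) = finrank ℂ (Cx V) := by
    simp [Module.finrank_baseChange, hdim]
  set B : Basis (Fin 4) ℂ (Cx V) := basisOfLinearIndependentOfCardEqFinrank hli hcard with hBdef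
  have hB : ∀ i, B i = tf k n m i := fun i => by
    rw [hBdef, coe_basisOfLinearIndependentOfCardEqFinrank]
  have hnd : (gW g).Nondegenerate := gW_nondeg hsymm ht B hB
  have htr := trg_formula hsymm ht B hB hnd
  have t0 : tf k n m 0 = ι k := rfl
  have t1 : tf k n m 1 = ι n := rfl
  have t2 : tf k n m 2 = m := rfl
  have t3 : tf k n m 3 = conjW m := rfl
  have sprod_symm : ∀ u v : Cx V, (sprod g u v).IsSymm := by
    intro u v
    constructor
    intro a b
    simp only [sprod, LinearMap.mk₂_apply, RingHom.id_apply]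
    ring
  -- key vanishing lemma
  have key : ∀ S : LinearMap.BilinForm ℂ (Cx V), S.IsSymm →
      S (ι k) (ι k) = 0 → S (ι k) m = 0 → S (ι k) (conjW m) = 0 → S m (conjW m) = 0 →
      ∀ u v, Dval g k S u v = 0 := by
    intro S hSsym p1 p2 p3 p4 u v
    have hsym' : ∀ a b : Cx V, S a b = S b a := fun a b => by simpa using hSsym.eq a b
    have htrS : trg g S = -2 * S (ι k) (ι n) := by
      rw [htr S, t0, t1, t2, t3, hsym' (ι n) (ι k), hsym' (conjW m) m, p4]
      ring
    have hDop : Dop g k S = 0 := by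
      refine B.ext fun i => B.ext fun j => ?_
      rw [hB, hB]
      have q1 : S (ι n) (ι k) = S (ι k) (ι n) := hsym' _ _
      have q2 : S m (ι k) = 0 := (hsym' _ _).trans p2
      have q3 : S (conjW m) (ι k) = 0 := (hsym' _ _).trans p3
      fin_cases i <;> fin_cases j <;>
      · simp only [tf, Nat.succ_eq_add_one, Nat.reduceAdd, Fin.zero_eta, Fin.mk_one,
          Fin.reduceFinMk, Fin.isValue, Matrix.cons_val_zero, Matrix.cons_val_one,
          Matrix.head_cons, Matrix.cons_val_two, Matrix.tail_cons, Matrix.cons_val_three,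
          LinearMap.zero_apply, Dop, LinearMap.mk₂_apply]
        rw [Dval, htrS]
        simp only [h1,h2,h3,h4,h5,h6,h7,h8,h9,h10,h1',h2',h7',h8',h9',h10',p1,p2,p3,p4,q1,q2,q3]
        ring
    have : Dop g k S u v = (0 : LinearMap.BilinForm ℂ (Cx V)) u v := by rw [hDop]
    simpa [Dop, LinearMap.mk₂_apply] using this
  -- the kernel as a submodule
  have trg_zero : trg g (0 : LinearMap.BilinForm ℂ (Cx V)) = 0 := by
    simpa using trg_smul g 0 0
  let K : Submodule ℂ (LinearMap.BilinForm ℂ (Cx V)) :=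
    { carrier := {S | S.IsSymm ∧ ∀ u v, Dval g k S u v = 0}
      add_mem' := by
        rintro S T ⟨hS1, hS2⟩ ⟨hT1, hT2⟩
        refine ⟨⟨fun a b => ?_⟩, fun u v => ?_⟩
        · have e1 := (LinearMap.BilinForm.isSymm_iff.mp hS1).eq a b
          have e2 := (LinearMap.BilinForm.isSymm_iff.mp hT1).eq a b
          simp only [RingHom.id_apply] at e1 e2
          simp only [LinearMap.add_apply, RingHom.id_apply, e1, e2]
        · have e1 := hS2 u v; have e2 := hT2 u v
          rw [Dval] at e1 e2 ⊢
          rw [trg_add]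
          simp only [LinearMap.add_apply]
          linear_combination e1 + e2
      zero_mem' := by
        refine ⟨⟨fun a b => by simp⟩, fun u v => ?_⟩
        rw [Dval, trg_zero]
        simp
      smul_mem' := by
        rintro c S ⟨hS1, hS2⟩
        refine ⟨⟨fun a b => ?_⟩, fun u v => ?_⟩
        · have e1 := (LinearMap.BilinForm.isSymm_iff.mp hS1).eq a b
          simp only [RingHom.id_apply] at e1
          simp only [LinearMap.smul_apply, smul_eq_mul, RingHom.id_apply, e1]
        · have e1 := hS2 u v
          rw [Dval] at e1 ⊢
          rw [trg_smul]
          simp only [LinearMap.smul_apply, smul_eq_mul]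
          linear_combination c * e1 }
  have genK : ∀ A ∈ ({sprod g (ι k) (ι k), sprod g (ι k) (ι n), sprod g (ι k) m,
      sprod g (ι k) (conjW m), sprod g m m, sprod g (conjW m) (conjW m)}
        : Set (LinearMap.BilinForm ℂ (Cx V))), A ∈ K := by
    intro A hA
    simp only [Set.mem_insert_iff, Set.mem_singleton_iff] at hA
    have hcond : A (ι k) (ι k) = 0 ∧ A (ι k) m = 0 ∧ A (ι k) (conjW m) = 0 ∧
        A m (conjW m) = 0 ∧ A.IsSymm := by
      rcases hA with rfl|rfl|rfl|rfl|rfl|rfl <;>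
        exact ⟨by simp [sprod, h1,h2,h3,h4,h5,h6,h7,h8,h9,h10,h1',h2',h7',h8',h9',h10'],
          by simp [sprod, h1,h2,h3,h4,h5,h6,h7,h8,h9,h10,h1',h2',h7',h8',h9',h10'],
          by simp [sprod, h1,h2,h3,h4,h5,h6,h7,h8,h9,h10,h1',h2',h7',h8',h9',h10'],
          by simp [sprod, h1,h2,h3,h4,h5,h6,h7,h8,h9,h10,h1',h2',h7',h8',h9',h10'],
          sprod_symm _ _⟩
    exact ⟨hcond.2.2.2.2, key A hcond.2.2.2.2 hcond.1 hcond.2.1 hcond.2.2.1 hcond.2.2.2.1⟩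
  constructor
  · ext S
    simp only [Set.mem_setOf_eq, SetLike.mem_coe]
    constructor
    · rintro ⟨hSsym, hD⟩
      have hsym' : ∀ a b : Cx V, S a b = S b a := fun a b => by simpa using hSsym.eq a b
      have p1 : S (ι k) (ι k) = 0 := by
        have hd := hD m (conjW m)
        rw [Dval, h3, h7, h8, h1] at hd
        linear_combination 2 * hd
      have p2 : S (ι k) m = 0 := by
        have hd := hD (ι n) m
        rw [Dval, h3, h9, h2, h7] at hd
        linear_combination 2 * hd
      have p3 : S (ι k) (conjW m) = 0 := by
        have hd := hD (ι n) (conjW m)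
        rw [Dval, h3, h10, h2, h8] at hd
        linear_combination 2 * hd
      have p4 : S m (conjW m) = 0 := by
        have hd := hD (ι n) (ι n)
        rw [Dval, h3, h2, h4] at hd
        have ht' := htr S
        rw [t0, t1, t2, t3, hsym' (ι n) (ι k), hsym' (conjW m) m] at ht'
        linear_combination hd - ht' / 2
      have q1 : S (ι n) (ι k) = S (ι k) (ι n) := hsym' _ _
      have q2 : S m (ι k) = 0 := (hsym' _ _).trans p2
      have q3 : S (conjW m) (ι k) = 0 := (hsym' _ _).trans p3
      have q4 : S m (ι n) = S (ι n) m := hsym' _ _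
      have q5 : S (conjW m) (ι n) = S (ι n) (conjW m) := hsym' _ _
      have q6 : S (conjW m) m = 0 := (hsym' _ _).trans p4
      have hT : S = S (ι n) (ι n) • sprod g (ι k) (ι k)
          + (2 * S (ι k) (ι n)) • sprod g (ι k) (ι n)
          + (-2 * S (ι n) (conjW m)) • sprod g (ι k) m
          + (-2 * S (ι n) m) • sprod g (ι k) (conjW m)
          + S (conjW m) (conjW m) • sprod g m m
          + S m m • sprod g (conjW m) (conjW m) := by
        refine B.ext fun i => B.ext fun j => ?_
        rw [hB, hB]
        fin_cases i <;> fin_cases j <;>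
        · simp only [tf, Nat.succ_eq_add_one, Nat.reduceAdd, Fin.zero_eta, Fin.mk_one,
            Fin.reduceFinMk, Fin.isValue, Matrix.cons_val_zero, Matrix.cons_val_one,
            Matrix.head_cons, Matrix.cons_val_two, Matrix.tail_cons, Matrix.cons_val_three,
            LinearMap.add_apply, LinearMap.smul_apply, smul_eq_mul,
            sprod, LinearMap.mk₂_apply,
            h1,h2,h3,h4,h5,h6,h7,h8,h9,h10,h1',h2',h7',h8',h9',h10',
            p1,p2,p3,p4,q1,q2,q3,q4,q5,q6]
          ring
      rw [hT]
      have m1 := Submodule.subset_span (R := ℂ) (s := {sprod g (ι k) (ι k), sprod g (ι k) (ι n),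
        sprod g (ι k) m, sprod g (ι k) (conjW m), sprod g m m, sprod g (conjW m) (conjW m)})
      refine Submodule.add_mem _ (Submodule.add_mem _ (Submodule.add_mem _ (Submodule.add_mem _
        (Submodule.add_mem _ ?_ ?_) ?_) ?_) ?_) ?_ <;>
        exact Submodule.smul_mem _ _ (m1 (by simp))
    · intro hSspan
      exact (Submodule.span_le.mpr genK) hSspan
  · have hGli : LinearIndependent ℂ ![sprod g (ι k) (ι k), sprod g (ι k) (ι n), sprod g (ι k) m,
        sprod g (ι k) (conjW m), sprod g m m, sprod g (conjW m) (conjW m)] := by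
      rw [Fintype.linearIndependent_iff]
      intro c hc
      have hv5 : ![sprod g (ι k) (ι k), sprod g (ι k) (ι n), sprod g (ι k) m,
        sprod g (ι k) (conjW m), sprod g m m, sprod g (conjW m) (conjW m)] (5 : Fin 6)
          = sprod g (conjW m) (conjW m) := rfl
      have e0 := congrArg (fun T : LinearMap.BilinForm ℂ (Cx V) => T (ι n) (ι n)) hc
      have e1 := congrArg (fun T : LinearMap.BilinForm ℂ (Cx V) => T (ι n) (ι k)) hc
      have e2 := congrArg (fun T : LinearMap.BilinForm ℂ (Cx V) => T (ι n) (conjW m)) hc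
      have e3 := congrArg (fun T : LinearMap.BilinForm ℂ (Cx V) => T (ι n) m) hc
      have e4 := congrArg (fun T : LinearMap.BilinForm ℂ (Cx V) => T (conjW m) (conjW m)) hc
      have e5 := congrArg (fun T : LinearMap.BilinForm ℂ (Cx V) => T m m) hc
      simp only [Fin.sum_univ_six, Matrix.cons_val_zero, Matrix.cons_val_one, Matrix.head_cons,
        Matrix.cons_val_two, Matrix.tail_cons, Matrix.cons_val_three, Matrix.cons_val_four,
        Fin.isValue, hv5, LinearMap.add_apply, LinearMap.smul_apply, smul_eq_mul,
        LinearMap.zero_apply] at e0 e1 e2 e3 e4 e5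
      simp only [sprod, LinearMap.mk₂_apply,
        h1,h2,h3,h4,h5,h6,h7,h8,h9,h10,h1',h2',h7',h8',h9',h10'] at e0 e1 e2 e3 e4 e5
      intro i
      fin_cases i
      · show c 0 = 0; linear_combination e0
      · show c 1 = 0; linear_combination 2 * e1
      · show c 2 = 0; linear_combination -2 * e2
      · show c 3 = 0; linear_combination -2 * e3
      · show c 4 = 0; linear_combination e4
      · show c 5 = 0; linear_combination e5
    have hrange : Set.range ![sprod g (ι k) (ι k), sprod g (ι k) (ι n), sprod g (ι k) m,
        sprod g (ι k) (conjW m), sprod g m m, sprod g (conjW m) (conjW m)]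
          = ({sprod g (ι k) (ι k), sprod g (ι k) (ι n), sprod g (ι k) m,
        sprod g (ι k) (conjW m), sprod g m m, sprod g (conjW m) (conjW m)}
          : Set (LinearMap.BilinForm ℂ (Cx V))) := by
      ext A
      simp only [Matrix.range_cons, Matrix.range_empty, Set.union_empty, Set.union_singleton,
        Set.singleton_union, Set.mem_insert_iff, Set.mem_singleton_iff]
      constructor <;> intro h <;> rcases h with h|h|h|h|h|h <;> simp only [h, true_or, or_true]
    rw [← hrange, finrank_span_eq_card hGli]
    rfl

end
end

section
/- Let k ∈ V be a nonzero null vector (g(k,k) = 0) and let (n, m, m̄) be a Newman–Penrose tetrad adapted to k. Then the kernel of D[k], acting on complex symmetric bilinear forms on W, is the internal direct sum of the subspace G = {k ⊙ b : b ∈ W}, which has complex dimension 4, and the two-dimensional subspace spanned over ℂ by m⊙m and m̄⊙m̄. -/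
open scoped TensorProduct
open Module

noncomputable section

variable {V : Type} [AddCommGroup V] [Module ℝ V]

variable [FiniteDimensional ℝ V]

lemma sprod_apply (g : LinearMap.BilinForm ℝ V) (u v a b : Cx V) :
    sprod g u v a b = (1 / 2 : ℂ) * (gW g u a * gW g v b + gW g v a * gW g u b) := rfl

lemma sprodL_apply (g : LinearMap.BilinForm ℝ V) (u b : Cx V) :
    sprodL g u b = sprod g u b := rfl

set_option maxHeartbeats 1600000 in
/-- The kernel of `D[k]` on complex symmetric bilinear forms is the internal direct
sum of `G = {k ⊙ b : b ∈ W}` (of complex dimension 4) and the 2-dimensional span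
of `m⊙m` and `m̄⊙m̄`. -/
theorem statement_1 (g : LinearMap.BilinForm ℝ V) (hdim : finrank ℝ V = 4)
    (hg : g.Nondegenerate) (hsymm : g.IsSymm)
    (k n : V) (m : Cx V) (hk : k ≠ 0) (hknull : g k k = 0)
    (htetrad : IsNPTetrad g k n m) :
    (LinearMap.range (sprodL g (ι k)) : Set (LinearMap.BilinForm ℂ (Cx V)))
        = {S | ∃ b : Cx V, S = sprod g (ι k) b} ∧
      {S : LinearMap.BilinForm ℂ (Cx V) | S.IsSymm ∧ ∀ u v, Dval g k S u v = 0}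
        = ↑(LinearMap.range (sprodL g (ι k)) ⊔
            Submodule.span ℂ ({sprod g m m, sprod g (conjW m) (conjW m)} :
              Set (LinearMap.BilinForm ℂ (Cx V)))) ∧
      LinearMap.range (sprodL g (ι k)) ⊓
          Submodule.span ℂ ({sprod g m m, sprod g (conjW m) (conjW m)} :
            Set (LinearMap.BilinForm ℂ (Cx V))) = ⊥ ∧
      finrank ℂ ↥(LinearMap.range (sprodL g (ι k))) = 4 ∧
      finrank ℂ ↥(Submodule.span ℂ ({sprod g m m, sprod g (conjW m) (conjW m)} :
          Set (LinearMap.BilinForm ℂ (Cx V)))) = 2 := by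
  classical
  have gsym : ∀ u v : Cx V, gW g u v = gW g v u := fun u v => by
    simpa [gW] using (LinearMap.BilinForm.IsSymm.baseChange ℂ (LinearMap.BilinForm.isSymm_iff.mp hsymm)).eq u v
  obtain ⟨t1, t2, t3, t4, t5, t6, t7, t8, t9, t10⟩ := htetrad
  have t1' : gW g (conjW m) m = 1 := by rw [gsym]; exact t1
  have t2' : gW g (ι n) (ι k) = -1 := by rw [gsym]; exact t2
  have t7' : gW g m (ι k) = 0 := by rw [gsym]; exact t7
  have t8' : gW g (conjW m) (ι k) = 0 := by rw [gsym]; exact t8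
  have t9' : gW g m (ι n) = 0 := by rw [gsym]; exact t9
  have t10' : gW g (conjW m) (ι n) = 0 := by rw [gsym]; exact t10
  -- linear independence of the tetrad
  have hli : LinearIndependent ℂ ![ι k, ι n, m, conjW m] := by
    rw [Fintype.linearIndependent_iff]
    intro c hc
    rw [Fin.sum_univ_four] at hc
    simp only [Matrix.cons_val_zero, Matrix.cons_val_one, Matrix.head_cons,
      Matrix.cons_val_two, Matrix.tail_cons, Matrix.cons_val_three] at hc
    have h0 := congrArg (fun x => gW g (ι n) x) hc
    have h1 := congrArg (fun x => gW g (ι k) x) hc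
    have h2 := congrArg (fun x => gW g (conjW m) x) hc
    have h3 := congrArg (fun x => gW g m x) hc
    simp only [map_add, map_smul, smul_eq_mul, map_zero, t2', t4, t9, t10,
      mul_zero, add_zero, zero_add, mul_one, mul_neg_one, neg_eq_zero] at h0
    simp only [map_add, map_smul, smul_eq_mul, map_zero, t2, t3, t7, t8,
      mul_zero, add_zero, zero_add, mul_one, mul_neg_one, neg_eq_zero] at h1
    simp only [map_add, map_smul, smul_eq_mul, map_zero, t8', t10', t1', t6,
      mul_zero, add_zero, zero_add, mul_one, mul_neg_one, neg_eq_zero] at h2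
    simp only [map_add, map_smul, smul_eq_mul, map_zero, t7', t9', t5, t1,
      mul_zero, add_zero, zero_add, mul_one, mul_neg_one, neg_eq_zero] at h3
    intro i; fin_cases i <;> assumption
  have hcard : Fintype.card (Fin 4) = finrank ℂ (Cx V) := by
    rw [Module.finrank_baseChange, hdim]; rfl
  let bb : Basis (Fin 4) ℂ (Cx V) := basisOfLinearIndependentOfCardEqFinrank hli hcard
  have hbb : ⇑bb = ![ι k, ι n, m, conjW m] :=
    coe_basisOfLinearIndependentOfCardEqFinrank hli hcard
  -- the `gW`-dual family
  set eps : Fin 4 → Cx V := ![-(ι n), -(ι k), conjW m, m] with heps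
  have hcoord : ∀ i : Fin 4, (bb.coord i) = gW g (eps i) := by
    intro i
    refine bb.ext fun j => ?_
    rw [Basis.coord_apply, Basis.repr_self]
    fin_cases i <;> fin_cases j <;>
      simp [hbb, eps, t1, t1', t2, t2', t3, t4, t5, t6, t7, t7', t8, t8', t9, t9', t10, t10',
        Finsupp.single_apply]
  have hrepr : ∀ (i : Fin 4) (x : Cx V), bb.repr x i = gW g (eps i) x := by
    intro i x
    rw [← Basis.coord_apply, hcoord]
  -- nondegeneracy of `gW g`
  have hnd : (gW g).Nondegenerate := by
    suffices hndL : ∀ x : Cx V, (∀ y, gW g x y = 0) → x = 0 from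
      ⟨hndL, fun y hy => hndL y fun x => by rw [gsym]; exact hy x⟩
    intro x hx
    have hxr : ∀ i, bb.repr x i = 0 := by
      intro i; rw [hrepr, gsym]; exact hx (eps i)
    have h := bb.sum_repr x
    simp only [hxr, zero_smul, Finset.sum_const_zero] at h
    exact h.symm
  -- the defining property of `hatEnd`
  have hhat : ∀ (S : LinearMap.BilinForm ℂ (Cx V)) (a c : Cx V),
      gW g (hatEnd g S a) c = S a c := by
    intro S a c
    show gW g ((hatEnd g S) a) c = S a c
    rw [hatEnd, dif_pos hnd]
    exact LinearMap.BilinForm.apply_toDual_symm_apply (hB := hnd) (S a) c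
  -- the trace formula
  have htrace : ∀ S : LinearMap.BilinForm ℂ (Cx V),
      trg g S = -(S (ι k) (ι n)) - S (ι n) (ι k) + S m (conjW m) + S (conjW m) m := by
    intro S
    rw [trg, LinearMap.trace_eq_matrix_trace ℂ bb]
    have hdiag : ∀ i, LinearMap.toMatrix bb bb (hatEnd g S) i i = S (bb i) (eps i) := by
      intro i
      rw [LinearMap.toMatrix_apply, hrepr, gsym, hhat]
    rw [Matrix.trace, Fin.sum_univ_four]
    simp only [Matrix.diag_apply, hdiag, hbb, eps]
    simp only [Matrix.cons_val_zero, Matrix.cons_val_one, Matrix.head_cons,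
      Matrix.cons_val_two, Matrix.tail_cons, Matrix.cons_val_three, map_neg,
      LinearMap.neg_apply]
    ring
  -- conjunct 1
  have c1 : (LinearMap.range (sprodL g (ι k)) : Set (LinearMap.BilinForm ℂ (Cx V)))
      = {S | ∃ b : Cx V, S = sprod g (ι k) b} := by
    ext S
    simp only [SetLike.mem_coe, LinearMap.mem_range, Set.mem_setOf_eq, sprodL_apply]
    exact ⟨fun ⟨b, h⟩ => ⟨b, h.symm⟩, fun ⟨b, h⟩ => ⟨b, h.symm⟩⟩
  -- conjunct 2
  have c2 : {S : LinearMap.BilinForm ℂ (Cx V) | S.IsSymm ∧ ∀ u v, Dval g k S u v = 0}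
      = ↑(LinearMap.range (sprodL g (ι k)) ⊔
          Submodule.span ℂ ({sprod g m m, sprod g (conjW m) (conjW m)} :
            Set (LinearMap.BilinForm ℂ (Cx V)))) := by
    ext S
    simp only [Set.mem_setOf_eq, SetLike.mem_coe]
    constructor
    · rintro ⟨hs, hD⟩
      have hSsym : ∀ u v, S u v = S v u := fun u v => by simpa using LinearMap.BilinForm.isSymm_def.mp hs u v
      -- derived conditions
      have hkk : S (ι k) (ι k) = 0 := by
        have h := hD m (conjW m)
        simp only [Dval, t1, t2, t3, t4, t5, t7, t8] at h
        linear_combination 2 * h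
      have hkm : S (ι k) m = 0 := by
        have h := hD (ι n) m
        simp only [Dval, t2, t3, t7, t9] at h
        linear_combination 2 * h
      have hkm' : S (ι k) (conjW m) = 0 := by
        have h := hD (ι n) (conjW m)
        simp only [Dval, t2, t3, t8, t10] at h
        linear_combination 2 * h
      have hmmb : S m (conjW m) = 0 := by
        have h := hD (ι n) (ι n)
        simp only [Dval, t2, t3, t4] at h
        have ht := htrace S
        have h1 := hSsym (ι n) (ι k)
        have h2 := hSsym (conjW m) m
        linear_combination h - ht / 2 + h1 / 2 - h2 / 2
      have s2' : S m (ι k) = 0 := (hSsym m (ι k)).trans hkm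
      have s3' : S (conjW m) (ι k) = 0 := (hSsym (conjW m) (ι k)).trans hkm'
      have s4' : S (conjW m) m = 0 := (hSsym (conjW m) m).trans hmmb
      have s5 : S (ι n) (ι k) = S (ι k) (ι n) := hSsym (ι n) (ι k)
      have s6 : S m (ι n) = S (ι n) m := hSsym m (ι n)
      have s7 : S (conjW m) (ι n) = S (ι n) (conjW m) := hSsym (conjW m) (ι n)
      set bb0 : Cx V := S (ι n) (ι n) • ι k + (2 * S (ι k) (ι n)) • ι n
          + (-2 * S (ι n) (conjW m)) • m + (-2 * S (ι n) m) • conjW m with hbb0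
      have hb0k : gW g bb0 (ι k) = -2 * S (ι k) (ι n) := by
        simp only [hbb0, map_add, map_smul, LinearMap.add_apply, LinearMap.smul_apply,
          smul_eq_mul, t2', t3, t7', t8']
        ring
      have hb0n : gW g bb0 (ι n) = -(S (ι n) (ι n)) := by
        simp only [hbb0, map_add, map_smul, LinearMap.add_apply, LinearMap.smul_apply,
          smul_eq_mul, t2, t4, t9', t10']
        ring
      have hb0m : gW g bb0 m = -2 * S (ι n) m := by
        simp only [hbb0, map_add, map_smul, LinearMap.add_apply, LinearMap.smul_apply,
          smul_eq_mul, t1', t5, t7, t9]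
        ring
      have hb0mb : gW g bb0 (conjW m) = -2 * S (ι n) (conjW m) := by
        simp only [hbb0, map_add, map_smul, LinearMap.add_apply, LinearMap.smul_apply,
          smul_eq_mul, t1, t6, t8, t10]
        ring
      refine Submodule.mem_sup.mpr
        ⟨sprod g (ι k) bb0,
          LinearMap.mem_range.mpr ⟨_, rfl⟩,
          S (conjW m) (conjW m) • sprod g m m + S m m • sprod g (conjW m) (conjW m),
          Submodule.mem_span_pair.mpr ⟨_, _, rfl⟩, ?_⟩
      refine LinearMap.ext_basis bb bb fun i j => ?_
      fin_cases i <;> fin_cases j <;>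
        · simp only [hbb, Fin.zero_eta, Fin.mk_one, Fin.reduceFinMk, Fin.isValue,
            Matrix.cons_val_zero, Matrix.cons_val_one, Matrix.head_cons,
            Matrix.cons_val_two, Matrix.tail_cons, Matrix.cons_val_three,
            LinearMap.add_apply, LinearMap.smul_apply, smul_eq_mul, sprod_apply,
            hb0k, hb0n, hb0m, hb0mb,
            t1, t1', t2, t2', t3, t4, t5, t6, t7, t7', t8, t8',
            t9, t9', t10, t10', hkk, hkm, hkm', hmmb, s2', s3', s4', s5, s6, s7]
          ring
    · intro hmem
      obtain ⟨X, hX, Y, hY, rfl⟩ := Submodule.mem_sup.mp hmem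
      obtain ⟨b, rfl⟩ := LinearMap.mem_range.mp hX
      obtain ⟨α, β, rfl⟩ := Submodule.mem_span_pair.mp hY
      rw [sprodL_apply]
      set T : LinearMap.BilinForm ℂ (Cx V) :=
        sprod g (ι k) b + (α • sprod g m m + β • sprod g (conjW m) (conjW m)) with hT
      have htr : trg g T = gW g b (ι k) := by
        rw [htrace]
        simp only [hT, LinearMap.add_apply, LinearMap.smul_apply, smul_eq_mul, sprod_apply,
          t1, t1', t2, t2', t3, t4, t5, t6, t7, t7', t8, t8', t9, t9', t10, t10']
        ring
      have hSk : ∀ x, T (ι k) x = (1 / 2 : ℂ) * (gW g b (ι k) * gW g (ι k) x) := by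
        intro x
        simp only [hT, LinearMap.add_apply, LinearMap.smul_apply, smul_eq_mul, sprod_apply,
          t3, t7', t8']
        ring
      constructor
      · rw [LinearMap.BilinForm.isSymm_def]
        intro u v
        simp only [RingHom.id_apply, hT, LinearMap.add_apply, LinearMap.smul_apply,
          smul_eq_mul, sprod_apply]
        ring
      · intro u v
        simp only [Dval, hSk, htr, t3]
        ring
  -- conjunct 3
  have c3 : LinearMap.range (sprodL g (ι k)) ⊓
      Submodule.span ℂ ({sprod g m m, sprod g (conjW m) (conjW m)} :
        Set (LinearMap.BilinForm ℂ (Cx V))) = ⊥ := by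
    refine (Submodule.eq_bot_iff _).mpr fun S hS => ?_
    obtain ⟨hS1, hS2⟩ := Submodule.mem_inf.mp hS
    obtain ⟨b, rfl⟩ := LinearMap.mem_range.mp hS1
    obtain ⟨α, β, hab⟩ := Submodule.mem_span_pair.mp hS2
    rw [sprodL_apply] at hab ⊢
    have h1 := congrArg (fun F : LinearMap.BilinForm ℂ (Cx V) => F (conjW m) (conjW m)) hab
    have h2 := congrArg (fun F : LinearMap.BilinForm ℂ (Cx V) => F m m) hab
    simp only [LinearMap.add_apply, LinearMap.smul_apply, smul_eq_mul, sprod_apply,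
      t1, t1', t5, t6, t8, t8', t7, t7'] at h1 h2
    have hα : α = 0 := by linear_combination h1
    have hβ : β = 0 := by linear_combination h2
    rw [hα, hβ] at hab
    simpa using hab.symm
  -- conjunct 4
  have hinj : Function.Injective (sprodL g (ι k)) := by
    rw [injective_iff_map_eq_zero]
    intro b hb
    have hval : ∀ x, sprod g (ι k) b (ι n) x = 0 := by
      intro x; rw [← sprodL_apply, hb]; rfl
    have hbn : gW g b (ι n) = 0 := by
      have h := hval (ι n)
      simp only [sprod_apply, t2, t4] at h
      linear_combination -h
    have hbk : gW g b (ι k) = 0 := by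
      have h := hval (ι k)
      simp only [sprod_apply, t2, t3, t2', hbn] at h
      linear_combination -2 * h
    have hbm : gW g b m = 0 := by
      have h := hval m
      simp only [sprod_apply, t2, t9, hbn] at h
      linear_combination -2 * h
    have hbmb : gW g b (conjW m) = 0 := by
      have h := hval (conjW m)
      simp only [sprod_apply, t2, t10, hbn] at h
      linear_combination -2 * h
    refine hnd.1 b fun y => ?_
    conv_lhs => rw [← bb.sum_repr y]
    rw [Fin.sum_univ_four]
    simp [hbb, hbn, hbk, hbm, hbmb]
  have c4 : finrank ℂ ↥(LinearMap.range (sprodL g (ι k))) = 4 := by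
    rw [LinearMap.finrank_range_of_inj hinj, Module.finrank_baseChange, hdim]
  -- conjunct 5
  have hli2 : LinearIndependent ℂ ![sprod g m m, sprod g (conjW m) (conjW m)] := by
    rw [LinearIndependent.pair_iff]
    intro s t hst
    have h1 := congrArg (fun F : LinearMap.BilinForm ℂ (Cx V) => F (conjW m) (conjW m)) hst
    have h2 := congrArg (fun F : LinearMap.BilinForm ℂ (Cx V) => F m m) hst
    simp only [LinearMap.add_apply, LinearMap.smul_apply, smul_eq_mul, sprod_apply,
      LinearMap.zero_apply, t1, t1', t5, t6] at h1 h2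
    constructor
    · linear_combination h1
    · linear_combination h2
  have hsetr : ({sprod g m m, sprod g (conjW m) (conjW m)} :
      Set (LinearMap.BilinForm ℂ (Cx V)))
      = Set.range ![sprod g m m, sprod g (conjW m) (conjW m)] := by
    ext x
    simp only [Set.mem_insert_iff, Set.mem_singleton_iff, Set.mem_range,
      Fin.exists_fin_two, Matrix.cons_val_zero, Matrix.cons_val_one, Matrix.head_cons, eq_comm]
  have c5 : finrank ℂ ↥(Submodule.span ℂ ({sprod g m m, sprod g (conjW m) (conjW m)} :
      Set (LinearMap.BilinForm ℂ (Cx V)))) = 2 := by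
    rw [hsetr, finrank_span_eq_card hli2]
    rfl
  exact ⟨c1, c2, c3, c4, c5⟩

end
end

section
/- Let k ∈ V be a nonzero null vector and (n, m, m̄) a Newman–Penrose tetrad adapted to k. Then the set of complex symmetric bilinear forms S on W satisfying the transversality condition S(k, v) = 0 for all v ∈ W is a complex subspace of dimension 6, and the six forms m⊙m, m̄⊙m̄, m⊙m̄, k⊙k, k⊙m, k⊙m̄ form a basis of this subspace; hence every transverse symmetric form a admits a unique expansion a = z₁ m⊙m + z₂ m̄⊙m̄ + z₃ m⊙m̄ + z₄ k⊙k + z₅ k⊙m + z₆ k⊙m̄ with z₁,…,z₆ ∈ ℂ. -/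
open scoped TensorProduct
open Module

noncomputable section

variable {V : Type} [AddCommGroup V] [Module ℝ V]

variable [FiniteDimensional ℝ V]

lemma sprod_isSymm (g : LinearMap.BilinForm ℝ V) (u v : Cx V) : (sprod g u v).IsSymm := by
  refine ⟨fun x y => ?_⟩
  simp only [RingHom.id_apply, sprod_apply]
  ring

lemma sprod_transverse (g : LinearMap.BilinForm ℝ V) {u v w : Cx V}
    (hu : gW g u w = 0) (hv : gW g v w = 0) (x : Cx V) : sprod g u v w x = 0 := by
  simp [sprod_apply, hu, hv]

set_option maxHeartbeats 2000000 in
/-- The transverse symmetric forms (`S(k,·) = 0`) form a 6-dimensional complex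
subspace with basis `m⊙m, m̄⊙m̄, m⊙m̄, k⊙k, k⊙m, k⊙m̄`; every transverse symmetric
form has a unique expansion in these six forms. -/
theorem statement_7 (g : LinearMap.BilinForm ℝ V) (hdim : finrank ℝ V = 4)
    (hg : g.Nondegenerate) (hsymm : g.IsSymm)
    (k n : V) (m : Cx V) (hk : k ≠ 0) (hknull : g k k = 0)
    (htetrad : IsNPTetrad g k n m) :
    {S : LinearMap.BilinForm ℂ (Cx V) | S.IsSymm ∧ ∀ v, S (ι k) v = 0}
        = ↑(Submodule.span ℂ (Set.range
            ![sprod g m m, sprod g (conjW m) (conjW m), sprod g m (conjW m),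
              sprod g (ι k) (ι k), sprod g (ι k) m, sprod g (ι k) (conjW m)])) ∧
      LinearIndependent ℂ
          ![sprod g m m, sprod g (conjW m) (conjW m), sprod g m (conjW m),
            sprod g (ι k) (ι k), sprod g (ι k) m, sprod g (ι k) (conjW m)] ∧
      finrank ℂ ↥(Submodule.span ℂ (Set.range
            ![sprod g m m, sprod g (conjW m) (conjW m), sprod g m (conjW m),
              sprod g (ι k) (ι k), sprod g (ι k) m, sprod g (ι k) (conjW m)])) = 6 ∧
      ∀ a : LinearMap.BilinForm ℂ (Cx V), a.IsSymm → (∀ v, a (ι k) v = 0) →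
        ∃! z : Fin 6 → ℂ,
          a = z 0 • sprod g m m + z 1 • sprod g (conjW m) (conjW m)
              + z 2 • sprod g m (conjW m) + z 3 • sprod g (ι k) (ι k)
              + z 4 • sprod g (ι k) m + z 5 • sprod g (ι k) (conjW m) := by
  obtain ⟨h1, h2, h3, h4, h5, h6, h7, h8, h9, h10⟩ := htetrad
  have hGsymm : ∀ u v : Cx V, gW g u v = gW g v u := by
    intro u v
    have := (LinearMap.BilinForm.IsSymm.baseChange (A := ℂ) (LinearMap.BilinForm.isSymm_iff.1 hsymm)).eq u v
    simp only [RingHom.id_apply] at this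
    exact this
  -- the sixteen metric values on the tetrad
  have gKK : gW g (ι k) (ι k) = 0 := h3
  have gKN : gW g (ι k) (ι n) = -1 := h2
  have gKM : gW g (ι k) m = 0 := h7
  have gKM' : gW g (ι k) (conjW m) = 0 := h8
  have gNK : gW g (ι n) (ι k) = -1 := by rw [hGsymm]; exact h2
  have gNN : gW g (ι n) (ι n) = 0 := h4
  have gNM : gW g (ι n) m = 0 := h9
  have gNM' : gW g (ι n) (conjW m) = 0 := h10
  have gMK : gW g m (ι k) = 0 := by rw [hGsymm]; exact h7
  have gMN : gW g m (ι n) = 0 := by rw [hGsymm]; exact h9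
  have gMM : gW g m m = 0 := h5
  have gMM' : gW g m (conjW m) = 1 := h1
  have gM'K : gW g (conjW m) (ι k) = 0 := by rw [hGsymm]; exact h8
  have gM'N : gW g (conjW m) (ι n) = 0 := by rw [hGsymm]; exact h10
  have gM'M : gW g (conjW m) m = 1 := by rw [hGsymm]; exact h1
  have gM'M' : gW g (conjW m) (conjW m) = 0 := h6
  -- (ι k, ι n, m, conjW m) is a basis of W
  have finrankW : finrank ℂ (Cx V) = 4 := by
    rw [Module.finrank_baseChange, hdim]
  have li4 : LinearIndependent ℂ ![ι k, ι n, m, conjW m] := by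
    rw [Fintype.linearIndependent_iff]
    intro z hz
    have hz' : z 0 • ι k + z 1 • ι n + z 2 • m + z 3 • conjW m = 0 := by
      simpa [Fin.sum_univ_four] using hz
    have e0 := congrArg (fun w => gW g w (ι n)) hz'
    have e1 := congrArg (fun w => gW g w (ι k)) hz'
    have e2 := congrArg (fun w => gW g w (conjW m)) hz'
    have e3 := congrArg (fun w => gW g w m) hz'
    simp only [map_add, map_smul, LinearMap.add_apply, LinearMap.smul_apply, smul_eq_mul,
      map_zero, LinearMap.zero_apply, gKK, gKN, gKM, gKM', gNK, gNN, gNM, gNM',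
      gMK, gMN, gMM, gMM', gM'K, gM'N, gM'M, gM'M'] at e0 e1 e2 e3
    intro i
    fin_cases i
    · show z 0 = 0; linear_combination -e0
    · show z 1 = 0; linear_combination -e1
    · show z 2 = 0; linear_combination e2
    · show z 3 = 0; linear_combination e3
  let b : Basis (Fin 4) ℂ (Cx V) :=
    basisOfLinearIndependentOfCardEqFinrank li4 (by simp [finrankW])
  have hb : ⇑b = ![ι k, ι n, m, conjW m] :=
    coe_basisOfLinearIndependentOfCardEqFinrank li4 _
  -- the expansion of any transverse symmetric form
  have expand : ∀ a : LinearMap.BilinForm ℂ (Cx V), a.IsSymm → (∀ v, a (ι k) v = 0) →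
      a = a (conjW m) (conjW m) • sprod g m m + a m m • sprod g (conjW m) (conjW m)
        + (2 * a m (conjW m)) • sprod g m (conjW m)
        + a (ι n) (ι n) • sprod g (ι k) (ι k)
        + (-2 * a (ι n) (conjW m)) • sprod g (ι k) m
        + (-2 * a (ι n) m) • sprod g (ι k) (conjW m) := by
    intro a ha htr
    have hsa : ∀ u v : Cx V, a u v = a v u := fun u v => by simpa using ha.eq u v
    have hNK : a (ι n) (ι k) = 0 := by rw [hsa]; exact htr _
    have hMK : a m (ι k) = 0 := by rw [hsa]; exact htr _
    have hM'K : a (conjW m) (ι k) = 0 := by rw [hsa]; exact htr _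
    have hMN : a m (ι n) = a (ι n) m := hsa _ _
    have hM'N : a (conjW m) (ι n) = a (ι n) (conjW m) := hsa _ _
    have hM'M : a (conjW m) m = a m (conjW m) := hsa _ _
    apply LinearMap.ext_basis b b
    intro i j
    rw [hb]
    fin_cases i <;> fin_cases j <;>
      simp [LinearMap.add_apply, LinearMap.smul_apply, smul_eq_mul, sprod_apply,
        htr, hNK, hMK, hM'K, hMN, hM'N, hM'M,
        gKK, gKN, gKM, gKM', gNK, gNN, gNM, gNM',
        gMK, gMN, gMM, gMM', gM'K, gM'N, gM'M, gM'M'] <;>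
      ring
  -- linear independence of the six symmetric products
  have li6 : LinearIndependent ℂ
      ![sprod g m m, sprod g (conjW m) (conjW m), sprod g m (conjW m),
        sprod g (ι k) (ι k), sprod g (ι k) m, sprod g (ι k) (conjW m)] := by
    rw [Fintype.linearIndependent_iff]
    intro z hz
    have hz' : z 0 • sprod g m m + z 1 • sprod g (conjW m) (conjW m)
        + z 2 • sprod g m (conjW m) + z 3 • sprod g (ι k) (ι k)
        + z 4 • sprod g (ι k) m + z 5 • sprod g (ι k) (conjW m) = 0 := by
      simpa [Fin.sum_univ_six] using hz
    have e0 := congrArg (fun S : LinearMap.BilinForm ℂ (Cx V) =>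
      S (conjW m) (conjW m)) hz'
    have e1 := congrArg (fun S : LinearMap.BilinForm ℂ (Cx V) => S m m) hz'
    have e2 := congrArg (fun S : LinearMap.BilinForm ℂ (Cx V) => S m (conjW m)) hz'
    have e3 := congrArg (fun S : LinearMap.BilinForm ℂ (Cx V) => S (ι n) (ι n)) hz'
    have e4 := congrArg (fun S : LinearMap.BilinForm ℂ (Cx V) => S (ι n) (conjW m)) hz'
    have e5 := congrArg (fun S : LinearMap.BilinForm ℂ (Cx V) => S (ι n) m) hz'
    simp only [LinearMap.add_apply, LinearMap.smul_apply, smul_eq_mul, sprod_apply,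
      LinearMap.zero_apply, gKK, gKN, gKM, gKM', gNK, gNN, gNM, gNM',
      gMK, gMN, gMM, gMM', gM'K, gM'N, gM'M, gM'M'] at e0 e1 e2 e3 e4 e5
    intro i
    fin_cases i
    · show z 0 = 0; linear_combination e0
    · show z 1 = 0; linear_combination e1
    · show z 2 = 0; linear_combination 2 * e2
    · show z 3 = 0; linear_combination e3
    · show z 4 = 0; linear_combination -2 * e4
    · show z 5 = 0; linear_combination -2 * e5
  refine ⟨?_, li6, ?_, ?_⟩
  · -- the set equality
    ext S
    simp only [Set.mem_setOf_eq, SetLike.mem_coe]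
    constructor
    · rintro ⟨hS, htrS⟩
      rw [expand S hS htrS]
      have mem : ∀ i : Fin 6,
          ![sprod g m m, sprod g (conjW m) (conjW m), sprod g m (conjW m),
            sprod g (ι k) (ι k), sprod g (ι k) m, sprod g (ι k) (conjW m)] i ∈
          Submodule.span ℂ (Set.range
            ![sprod g m m, sprod g (conjW m) (conjW m), sprod g m (conjW m),
              sprod g (ι k) (ι k), sprod g (ι k) m, sprod g (ι k) (conjW m)]) :=
        fun i => Submodule.subset_span ⟨i, rfl⟩
      exact Submodule.add_mem _ (Submodule.add_mem _ (Submodule.add_mem _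
        (Submodule.add_mem _ (Submodule.add_mem _
          (Submodule.smul_mem _ _ (mem 0)) (Submodule.smul_mem _ _ (mem 1)))
          (Submodule.smul_mem _ _ (mem 2))) (Submodule.smul_mem _ _ (mem 3)))
          (Submodule.smul_mem _ _ (mem 4))) (Submodule.smul_mem _ _ (mem 5))
    · intro hS
      refine Submodule.span_induction ?_ ?_ ?_ ?_ hS
      · rintro x ⟨i, rfl⟩
        fin_cases i <;>
          exact ⟨sprod_isSymm g _ _, fun v => sprod_transverse g
            (by first | exact gKK | exact gMK | exact gM'K)
            (by first | exact gKK | exact gMK | exact gM'K) v⟩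
      · exact ⟨⟨fun x y => by simp⟩, fun v => by simp⟩
      · rintro x y _ _ ⟨hx1, hx2⟩ ⟨hy1, hy2⟩
        refine ⟨⟨fun u v => ?_⟩, fun v => by simp [hx2 v, hy2 v]⟩
        have h1 : x u v = x v u := by simpa using hx1.eq u v
        have h2 : y u v = y v u := by simpa using hy1.eq u v
        simp [h1, h2]
      · rintro c x _ ⟨hx1, hx2⟩
        refine ⟨⟨fun u v => ?_⟩, fun v => by simp [hx2 v]⟩
        have h1 : x u v = x v u := by simpa using hx1.eq u v
        simp [h1]
  · -- the dimension count
    rw [finrank_span_eq_card li6]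
    simp
  · -- unique expansion
    intro a ha htr
    refine ⟨![a (conjW m) (conjW m), a m m, 2 * a m (conjW m), a (ι n) (ι n),
      -2 * a (ι n) (conjW m), -2 * a (ι n) m], ?_, ?_⟩
    · exact expand a ha htr
    · intro y hy
      have e0 := congrArg (fun S : LinearMap.BilinForm ℂ (Cx V) =>
        S (conjW m) (conjW m)) hy
      have e1 := congrArg (fun S : LinearMap.BilinForm ℂ (Cx V) => S m m) hy
      have e2 := congrArg (fun S : LinearMap.BilinForm ℂ (Cx V) => S m (conjW m)) hy
      have e3 := congrArg (fun S : LinearMap.BilinForm ℂ (Cx V) => S (ι n) (ι n)) hy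
      have e4 := congrArg (fun S : LinearMap.BilinForm ℂ (Cx V) => S (ι n) (conjW m)) hy
      have e5 := congrArg (fun S : LinearMap.BilinForm ℂ (Cx V) => S (ι n) m) hy
      simp only [LinearMap.add_apply, LinearMap.smul_apply, smul_eq_mul, sprod_apply,
        gKK, gKN, gKM, gKM', gNK, gNN, gNM, gNM',
        gMK, gMN, gMM, gMM', gM'K, gM'N, gM'M, gM'M'] at e0 e1 e2 e3 e4 e5
      funext i
      fin_cases i
      · show y 0 = a (conjW m) (conjW m); linear_combination -e0
      · show y 1 = a m m; linear_combination -e1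
      · show y 2 = 2 * a m (conjW m); linear_combination -2 * e2
      · show y 3 = a (ι n) (ι n); linear_combination -e3
      · show y 4 = -2 * a (ι n) (conjW m); linear_combination 2 * e4
      · show y 5 = -2 * a (ι n) m; linear_combination 2 * e5

end
end

section
/- Let k ∈ V be a nonzero null vector (g(k,k) = 0) and let S be a complex symmetric bilinear form on W with D[k](S) = 0. Then the trace-reversed form Š := S − (1/2)(tr_g S)·g is transverse to k: Š(k, v) = 0 for all v ∈ W. -/
open scoped TensorProduct
open Module

noncomputable section

variable {V : Type} [AddCommGroup V] [Module ℝ V]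

variable [FiniteDimensional ℝ V]

/-- If `k` is nonzero null and `D[k](S) = 0`, then the trace-reversed form
`Š = S − (1/2)(tr_g S) g` is transverse to `k`: `Š(k,v) = 0` for all `v`. -/
theorem statement_9 (g : LinearMap.BilinForm ℝ V) (hdim : finrank ℝ V = 4)
    (hg : g.Nondegenerate) (hsymm : g.IsSymm)
    (k : V) (hk : k ≠ 0) (hknull : g k k = 0)
    (S : LinearMap.BilinForm ℂ (Cx V)) (hS : S.IsSymm)
    (hker : ∀ u v : Cx V, Dval g k S u v = 0) :
    ∀ v : Cx V, S (ι k) v - (1 / 2 : ℂ) * trg g S * gW g (ι k) v = 0 := by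
  -- `gW` at real vectors
  have gWι : ∀ a b : V, gW g (ι a) (ι b) = ((g a b : ℝ) : ℂ) := by
    intro a b
    simp [gW, ι, Complex.real_smul]
  -- find u₀ with g k u₀ = 1
  have hex : ∃ u : V, g k u ≠ 0 := by
    by_contra h
    push_neg at h
    exact hk (hg.1 k h)
  obtain ⟨u, hu⟩ := hex
  set u₀ : V := (g k u)⁻¹ • u with hu₀def
  have hku₀ : g k u₀ = 1 := by
    simp [hu₀def, inv_mul_cancel₀ hu]
  -- find w with g k w = 0 and g w w ≠ 0
  have hw : ∃ w : V, g k w = 0 ∧ g w w ≠ 0 := by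
    by_contra h
    push_neg at h
    have hpol : ∀ w w' : V, g k w = 0 → g k w' = 0 → g w w' = 0 := by
      intro w w' h1 h2
      have h3 : g k (w + w') = 0 := by simp [h1, h2]
      have e := h (w + w') h3
      have e1 := h w h1
      have e2 := h w' h2
      have hs : g w' w = g w w' := by
        have := hsymm.eq w w'
        simpa using this.symm
      simp only [map_add, LinearMap.add_apply] at e
      rw [e1, e2, hs] at e
      linarith
    -- the map H → ℝ, w ↦ g w u₀ is injective on ker (g k)
    set H := LinearMap.ker (g k) with hH
    have hinj : Function.Injective ((g.flip u₀).domRestrict H) := by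
      rw [← LinearMap.ker_eq_bot]
      rw [LinearMap.ker_eq_bot']
      intro m hm
      have hmH : g k (m : V) = 0 := m.2
      have hmu : g (m : V) u₀ = 0 := by simpa [LinearMap.flip_apply] using hm
      have : (m : V) = 0 := by
        apply hg.1
        intro x
        have hx : g k (x - g k x • u₀) = 0 := by
          simp [hku₀]
        have h1 : g (m : V) (x - g k x • u₀) = 0 := hpol _ _ hmH hx
        have h2 : g (m : V) x = g (m : V) (x - g k x • u₀) + g k x * g (m : V) u₀ := by
          simp [map_sub, map_smul, mul_comm]
        rw [h2, h1, hmu]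
        ring
      exact Subtype.ext this
    have h3 : finrank ℝ H = 3 := by
      have := LinearMap.finrank_range_add_finrank_ker (g k)
      have hr : LinearMap.range (g k) = ⊤ := by
        rw [LinearMap.range_eq_top]
        intro c
        exact ⟨c • u₀, by simp [hku₀]⟩
      rw [hr, hdim] at this
      have htop : finrank ℝ (⊤ : Submodule ℝ ℝ) = 1 := by
        rw [finrank_top, finrank_self]
      rw [htop] at this
      rw [hH]
      omega
    have hle : finrank ℝ H ≤ finrank ℝ ℝ :=
      LinearMap.finrank_le_finrank_of_injective hinj
    rw [h3, finrank_self] at hle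
    omega
  obtain ⟨w, hkw, hww⟩ := hw
  -- symmetry of S
  have hSsymm : ∀ x y : Cx V, S x y = S y x := by
    intro x y
    simpa using hS.eq x y
  set t := trg g S with ht
  have hgkk : gW g (ι k) (ι k) = 0 := by rw [gWι, hknull]; simp
  have hgku₀ : gW g (ι k) (ι u₀) = 1 := by rw [gWι, hku₀]; simp
  have hgkw : gW g (ι k) (ι w) = 0 := by rw [gWι, hkw]; simp
  -- S(k,k) = 0, from Dval at (w,w)
  have hSkk : S (ι k) (ι k) = 0 := by
    have h1 := hker (ι w) (ι w)
    rw [Dval, hgkk, hgkw, gWι] at h1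
    have hww' : ((g w w : ℝ) : ℂ) ≠ 0 := by exact_mod_cast hww
    have h2 : ((g w w : ℝ) : ℂ) * S (ι k) (ι k) = 0 := by linear_combination 2*h1
    exact (mul_eq_zero.mp h2).resolve_left hww'
  -- S(k,u₀) = t/2, from Dval at (u₀,u₀)
  have hSku₀ : S (ι k) (ι u₀) = t / 2 := by
    have h1 := hker (ι u₀) (ι u₀)
    rw [Dval, hgkk, hgku₀, hSkk] at h1
    linear_combination -h1
  -- conclude
  intro v
  have h1 := hker (ι u₀) v
  rw [Dval, hgkk, hgku₀, hSkk, hSku₀] at h1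
  linear_combination -2*h1


end
end
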